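/- For binary relations on a set of arguments constructed as above, the sixteen notions of justifiability collapse into the nine classes ordered by inclusion: a/* ⊆ d/* ⊆ {sa/sa = sa/su, u/su = u/u}, sa/sa ⊆ {sa/u = sa/d = sa/a, su/su}, u/u ⊆ {su/su, u/a = u/d = u/sa}, su/su ⊆ {su/u, su/sa}, and su/u, su/sa ⊆ su/a = su/d. -/
import Mathlib


/-- The set of `x/y`-acceptable arguments with respect to `S`. -/
def Facc {Arg : Type*} (x y : Arg → Arg → Prop) (S : Set Arg) : Set Arg :=
  {A | ∀ B, x B A → ∃ C ∈ S, y C B}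

theorem Facc_mono {Arg : Type*} (x y : Arg → Arg → Prop) : Monotone (Facc x y) := by
  intro S T hST A hA B hB
  obtain ⟨C, hC, hCB⟩ := hA B hB
  exact ⟨C, hST hC, hCB⟩

/-- `Facc` as an order homomorphism. -/
def Fhom {Arg : Type*} (x y : Arg → Arg → Prop) : Set Arg →o Set Arg :=
  ⟨Facc x y, Facc_mono x y⟩

/-- The least-fixpoint argumentation semantics: the set of `x/y`-justified arguments. -/
def Jlfp {Arg : Type*} (x y : Arg → Arg → Prop) : Set Arg :=
  OrderHom.lfp (Fhom x y)

lemma Jlfp_mono {Arg : Type*} {x x' y y' : Arg → Arg → Prop}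
    (hx : ∀ B A, x' B A → x B A) (hy : ∀ C B, y C B → y' C B) :
    Jlfp x y ⊆ Jlfp x' y' := by
  have h : Fhom x y ≤ Fhom x' y' := by
    intro S A hA B hB
    obtain ⟨C, hC, hyCB⟩ := hA B (hx B A hB)
    exact ⟨C, hC, hy C B hyCB⟩
  exact OrderHom.lfp.monotone h

lemma Jlfp_strengthen {Arg : Type*} {x y y' : Arg → Arg → Prop}
    (h : ∀ B C, y C B → y' C B ∨ x B C) :
    Jlfp x y ⊆ Jlfp x y' := by
  have hfix : Facc x y' (Jlfp x y') = Jlfp x y' := OrderHom.map_lfp (Fhom x y')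
  apply OrderHom.lfp_le
  intro A hA
  rw [show (Jlfp x y' : Set Arg) = Facc x y' (Jlfp x y') from hfix.symm]
  intro B hB
  obtain ⟨C, hC, hyCB⟩ := hA B hB
  rcases h B C hyCB with h' | hxBC
  · exact ⟨C, hC, h'⟩
  · rw [show (Jlfp x y' : Set Arg) = Facc x y' (Jlfp x y') from hfix.symm] at hC
    exact hC B hxBC

/-- The hierarchy of notions of justifiability: the sixteen notions collapse
into nine classes ordered by inclusion. -/
theorem justifiability_hierarchy {Arg : Type*} (u r a d sa su : Arg → Arg → Prop)
    (hr : ∀ A B, r A B → r B A)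
    (ha : ∀ A B, a A B ↔ u A B ∨ r A B)
    (hd : ∀ A B, d A B ↔ u A B ∨ (r A B ∧ ¬ u B A))
    (hsa : ∀ A B, sa A B ↔ a A B ∧ ¬ u B A)
    (hsu : ∀ A B, su A B ↔ u A B ∧ ¬ u B A) :
    -- collapsing equalities
    (Jlfp a su = Jlfp a u ∧ Jlfp a u = Jlfp a a ∧ Jlfp a a = Jlfp a d ∧ Jlfp a d = Jlfp a sa) ∧
    (Jlfp d su = Jlfp d u ∧ Jlfp d u = Jlfp d a ∧ Jlfp d a = Jlfp d d ∧ Jlfp d d = Jlfp d sa) ∧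
    (Jlfp sa sa = Jlfp sa su) ∧
    (Jlfp u su = Jlfp u u) ∧
    (Jlfp sa u = Jlfp sa d ∧ Jlfp sa d = Jlfp sa a) ∧
    (Jlfp u a = Jlfp u d ∧ Jlfp u d = Jlfp u sa) ∧
    (Jlfp su a = Jlfp su d) ∧
    -- inclusions
    (Jlfp a a ⊆ Jlfp d d) ∧
    (Jlfp d d ⊆ Jlfp sa sa) ∧ (Jlfp d d ⊆ Jlfp u u) ∧
    (Jlfp sa sa ⊆ Jlfp sa u) ∧ (Jlfp sa sa ⊆ Jlfp su su) ∧
    (Jlfp u u ⊆ Jlfp su su) ∧ (Jlfp u u ⊆ Jlfp u a) ∧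
    (Jlfp su su ⊆ Jlfp su u) ∧ (Jlfp su su ⊆ Jlfp su sa) ∧
    (Jlfp su u ⊆ Jlfp su a) ∧ (Jlfp su sa ⊆ Jlfp su a) := by
  have idr : ∀ (x : Arg → Arg → Prop) (B A : Arg), x B A → x B A := fun _ _ _ h => h
  -- inclusions between the relations
  have hsu_u : ∀ C B, su C B → u C B := fun C B h => ((hsu C B).1 h).1
  have hsu_sa : ∀ C B, su C B → sa C B := by
    intro C B h; rw [hsu] at h; rw [hsa, ha]; tauto
  have hsa_d : ∀ C B, sa C B → d C B := by
    intro C B h; rw [hsa, ha] at h; rw [hd]; tauto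
  have hu_d : ∀ C B, u C B → d C B := by intro C B h; rw [hd]; tauto
  have hd_a : ∀ C B, d C B → a C B := by intro C B h; rw [hd] at h; rw [ha]; tauto
  have hu_a : ∀ C B, u C B → a C B := fun C B h => hd_a C B (hu_d C B h)
  have hsa_a : ∀ C B, sa C B → a C B := fun C B h => hd_a C B (hsa_d C B h)
  have hsu_d : ∀ C B, su C B → d C B := fun C B h => hu_d C B (hsu_u C B h)
  have hsu_a : ∀ C B, su C B → a C B := fun C B h => hd_a C B (hsu_d C B h)
  -- strengthening conditions
  have S_a : ∀ B C, a C B → su C B ∨ a B C := by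
    intro B C h; have := hr C B; rw [ha] at h ⊢; rw [hsu]; tauto
  have S_d : ∀ B C, a C B → su C B ∨ d B C := by
    intro B C h; have := hr C B; rw [ha] at h; rw [hd, hsu]; tauto
  have S_sa : ∀ B C, sa C B → su C B ∨ sa B C := by
    intro B C h; have := hr C B; rw [hsa, ha] at h ⊢; rw [hsu]; tauto
  have S_u : ∀ B C, u C B → su C B ∨ u B C := by
    intro B C h; rw [hsu]; tauto
  have S_sau : ∀ B C, a C B → u C B ∨ sa B C := by
    intro B C h; have := hr C B; rw [ha] at h; rw [hsa, ha]; tauto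
  have S_usa : ∀ B C, a C B → sa C B ∨ u B C := by
    intro B C h; rw [hsa]; tauto
  have S_sud : ∀ B C, a C B → d C B ∨ su B C := by
    intro B C h; have := hr C B; rw [ha] at h; rw [hd, hsu]; tauto
  -- x = a block
  have ha_su_u : Jlfp a su ⊆ Jlfp a u := Jlfp_mono (idr a) hsu_u
  have ha_u_a : Jlfp a u ⊆ Jlfp a a := Jlfp_mono (idr a) hu_a
  have ha_a_su : Jlfp a a ⊆ Jlfp a su := Jlfp_strengthen S_a
  have ha_su_d : Jlfp a su ⊆ Jlfp a d := Jlfp_mono (idr a) hsu_d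
  have ha_d_a : Jlfp a d ⊆ Jlfp a a := Jlfp_mono (idr a) hd_a
  have ha_su_sa : Jlfp a su ⊆ Jlfp a sa := Jlfp_mono (idr a) hsu_sa
  have ha_sa_a : Jlfp a sa ⊆ Jlfp a a := Jlfp_mono (idr a) hsa_a
  -- x = d block
  have hd_su_u : Jlfp d su ⊆ Jlfp d u := Jlfp_mono (idr d) hsu_u
  have hd_u_a : Jlfp d u ⊆ Jlfp d a := Jlfp_mono (idr d) hu_a
  have hd_a_su : Jlfp d a ⊆ Jlfp d su := Jlfp_strengthen S_d
  have hd_su_d : Jlfp d su ⊆ Jlfp d d := Jlfp_mono (idr d) hsu_d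
  have hd_d_a : Jlfp d d ⊆ Jlfp d a := Jlfp_mono (idr d) hd_a
  have hd_su_sa : Jlfp d su ⊆ Jlfp d sa := Jlfp_mono (idr d) hsu_sa
  have hd_sa_a : Jlfp d sa ⊆ Jlfp d a := Jlfp_mono (idr d) hsa_a
  -- main strengthenings
  have hsasa_su : Jlfp sa sa ⊆ Jlfp sa su := Jlfp_strengthen S_sa
  have huu_su : Jlfp u u ⊆ Jlfp u su := Jlfp_strengthen S_u
  have hsa_a_u : Jlfp sa a ⊆ Jlfp sa u := Jlfp_strengthen S_sau
  have hu_a_sa : Jlfp u a ⊆ Jlfp u sa := Jlfp_strengthen S_usa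
  have hsu_a_d : Jlfp su a ⊆ Jlfp su d := Jlfp_strengthen S_sud
  refine ⟨⟨?_, ?_, ?_, ?_⟩, ⟨?_, ?_, ?_, ?_⟩, ?_, ?_, ⟨?_, ?_⟩, ⟨?_, ?_⟩, ?_, ?_, ?_, ?_, ?_,
    ?_, ?_, ?_, ?_, ?_, ?_, ?_⟩
  · exact Set.Subset.antisymm ha_su_u (ha_u_a.trans ha_a_su)
  · exact Set.Subset.antisymm ha_u_a (ha_a_su.trans ha_su_u)
  · exact Set.Subset.antisymm (ha_a_su.trans ha_su_d) ha_d_a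
  · exact Set.Subset.antisymm (ha_d_a.trans (ha_a_su.trans ha_su_sa))
      (ha_sa_a.trans (ha_a_su.trans ha_su_d))
  · exact Set.Subset.antisymm hd_su_u (hd_u_a.trans hd_a_su)
  · exact Set.Subset.antisymm hd_u_a (hd_a_su.trans hd_su_u)
  · exact Set.Subset.antisymm (hd_a_su.trans hd_su_d) hd_d_a
  · exact Set.Subset.antisymm (hd_d_a.trans (hd_a_su.trans hd_su_sa))
      (hd_sa_a.trans (hd_a_su.trans hd_su_d))
  · exact Set.Subset.antisymm hsasa_su (Jlfp_mono (idr sa) hsu_sa)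
  · exact Set.Subset.antisymm (Jlfp_mono (idr u) hsu_u) huu_su
  · exact Set.Subset.antisymm (Jlfp_mono (idr sa) hu_d)
      ((Jlfp_mono (idr sa) hd_a).trans hsa_a_u)
  · exact Set.Subset.antisymm (Jlfp_mono (idr sa) hd_a) (hsa_a_u.trans (Jlfp_mono (idr sa) hu_d))
  · exact Set.Subset.antisymm (hu_a_sa.trans (Jlfp_mono (idr u) hsa_d)) (Jlfp_mono (idr u) hd_a)
  · exact Set.Subset.antisymm ((Jlfp_mono (idr u) hd_a).trans hu_a_sa) (Jlfp_mono (idr u) hsa_d)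
  · exact Set.Subset.antisymm hsu_a_d (Jlfp_mono (idr su) hd_a)
  · exact (ha_a_su.trans ha_su_d).trans (Jlfp_mono hd_a (idr d))
  · exact hd_d_a.trans ((hd_a_su.trans hd_su_sa).trans (Jlfp_mono hsa_d (idr sa)))
  · exact hd_d_a.trans ((hd_a_su.trans hd_su_u).trans (Jlfp_mono hu_d (idr u)))
  · exact hsasa_su.trans (Jlfp_mono (idr sa) hsu_u)
  · exact hsasa_su.trans (Jlfp_mono hsu_sa (idr su))
  · exact huu_su.trans (Jlfp_mono hsu_u (idr su))
  · exact Jlfp_mono (idr u) hu_a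
  · exact Jlfp_mono (idr su) hsu_u
  · exact Jlfp_mono (idr su) hsu_sa
  · exact Jlfp_mono (idr su) hu_a
  · exact Jlfp_mono (idr su) hsa_a
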